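/- Let k ≥ 2, let M be a matroid on the finite ground set V with rank r, and let f : (k+1)^V → ℝ be pairwise monotone. Suppose x* ∈ (k+1)^V is feasible (supp(x*) is independent in M), f(x*) ≥ f(y) for every feasible y, and x* is maximal with respect to ⪯ among feasible maximizers (there is no feasible y with x* ⪯ y, x* ≠ y, and f(y) = f(x*)). Then supp(x*) is a basis of M; in particular |supp(x*)| = r. -/
import Mathlib


namespace Stmt14

variable {V : Type*}

/-- A matroid on `V`, given by its collection of independent (finite) subsets. -/
structure FinMatroid (V : Type*) [DecidableEq V] where
  Indep : Finset V → Prop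
  indep_empty : Indep ∅
  indep_subset : ∀ ⦃A B : Finset V⦄, A ⊆ B → Indep B → Indep A
  indep_exchange : ∀ ⦃A B : Finset V⦄, Indep A → Indep B → A.card < B.card →
    ∃ x ∈ B \ A, Indep (insert x A)

/-- A basis is a maximal independent set. -/
def FinMatroid.IsBasis [DecidableEq V] (M : FinMatroid V) (B : Finset V) : Prop :=
  M.Indep B ∧ ∀ ⦃A : Finset V⦄, M.Indep A → B ⊆ A → A = B

/-- Marginal gain `Δ_{e,i} f(x) = f(x[e↦i]) − f(x)`. -/
def marg {k : ℕ} [DecidableEq V] (f : (V → Fin (k+1)) → ℝ)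
    (x : V → Fin (k+1)) (e : V) (i : Fin (k+1)) : ℝ :=
  f (Function.update x e i) - f x

/-- `x ⪯ y` : `y` agrees with `x` on the support of `x`. -/
def preceq {k : ℕ} (x y : V → Fin (k+1)) : Prop :=
  ∀ e, x e ≠ 0 → y e = x e

def PairwiseMonotone {k : ℕ} [DecidableEq V] (f : (V → Fin (k+1)) → ℝ) : Prop :=
  ∀ x : V → Fin (k+1), ∀ e, x e = 0 → ∀ i j : Fin (k+1), i ≠ 0 → j ≠ 0 → i ≠ j →
    marg f x e i + marg f x e j ≥ 0

/-- The support of `x` as a finset. -/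
def suppF {k : ℕ} [Fintype V] [DecidableEq V] (x : V → Fin (k+1)) : Finset V :=
  Finset.univ.filter (fun v => x v ≠ 0)

/-- For `k ≥ 2`, any maximal optimal solution for maximizing a pairwise-monotone
(`k`-submodular, possibly non-monotone) function under a matroid constraint has
support a basis; in particular its support has size `r`, the rank. -/
theorem stmt14 {k : ℕ} (hk : 2 ≤ k) [Fintype V] [DecidableEq V]
    (M : FinMatroid V) (r : ℕ)
    (hrank : ∀ B : Finset V, M.IsBasis B → B.card = r)
    (f : (V → Fin (k+1)) → ℝ) (hpm : PairwiseMonotone f)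
    (x : V → Fin (k+1)) (hfeas : M.Indep (suppF x))
    (hopt : ∀ y : V → Fin (k+1), M.Indep (suppF y) → f y ≤ f x)
    (hmax : ¬ ∃ y : V → Fin (k+1),
      M.Indep (suppF y) ∧ preceq x y ∧ x ≠ y ∧ f y = f x) :
    M.IsBasis (suppF x) ∧ (suppF x).card = r := by
  have hbasis : M.IsBasis (suppF x) := by
    refine ⟨hfeas, ?_⟩
    intro A hA hsub
    by_contra hne
    obtain ⟨e, heA, heS⟩ := Finset.exists_of_ssubset (hsub.ssubset_of_ne (Ne.symm hne))
    have hxe : x e = 0 := by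
      by_contra h
      exact heS (by simp [suppF, h])
    have hind : M.Indep (insert e (suppF x)) := by
      refine M.indep_subset ?_ hA
      intro a ha
      rcases Finset.mem_insert.mp ha with rfl | h
      · exact heA
      · exact hsub h
    have hsupp : ∀ m : Fin (k+1), m ≠ 0 →
        suppF (Function.update x e m) = insert e (suppF x) := by
      intro m hm
      ext v
      by_cases hv : v = e
      · subst hv; simp [suppF, hm]
      · simp [suppF, Function.update_of_ne hv, hv]
    set i : Fin (k+1) := ⟨1, by omega⟩ with hi
    set j : Fin (k+1) := ⟨2, by omega⟩ with hj
    have hpm' := hpm x e hxe i j (by simp [hi, Fin.ext_iff])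
      (by simp [hj, Fin.ext_iff]) (by simp [hi, hj, Fin.ext_iff])
    have hkey : ∃ m : Fin (k+1), m ≠ 0 ∧ f x ≤ f (Function.update x e m) := by
      by_contra h
      push_neg at h
      have h1 := h i (by simp [hi, Fin.ext_iff])
      have h2 := h j (by simp [hj, Fin.ext_iff])
      unfold marg at hpm'
      linarith
    obtain ⟨m, hm0, hge⟩ := hkey
    have hfeasy : M.Indep (suppF (Function.update x e m)) := by
      rw [hsupp m hm0]; exact hind
    refine hmax ⟨Function.update x e m, hfeasy, ?_, ?_, le_antisymm (hopt _ hfeasy) hge⟩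
    · intro v hv
      have : v ≠ e := fun h => hv (h ▸ hxe)
      exact Function.update_of_ne this _ _
    · intro h
      have : x e = m := by
        have := congrFun h e
        simpa using this
      exact hm0 (this ▸ hxe)
  exact ⟨hbasis, hrank _ hbasis⟩

end Stmt14
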